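/- Let S be a subset of nodes of a weighted directed graph such that the induced subgraph G[S] has no directed spanning tree, and no node of S has incoming edges from V \ S. Then there exist two nonempty disjoint subsets S₁, S₂ ⊆ S, neither of which has incoming edges from outside itself (within the whole graph G), so that under ẋ = -Lx the steady-state values of S₁ and S₂ are determined independently of each other; in particular S is not a set of nodes that converge to a common value for all positive edge weights and all initial conditions. -/

import Mathlib

open Filter Topology

/-- `S` converges to a common value for every choice of positive edge weights on
the edges of `E` (edge (j,i) gets weight `A i j > 0`, non-edges weight `0`) and
every solution of `ẋᵢ = Σⱼ aᵢⱼ (xⱼ - xᵢ)` (every initial condition). -/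
def ConvergesTogether {V : Type*} [Fintype V] (E : V → V → Prop) (S : Set V) : Prop :=
  ∀ A : Matrix V V ℝ,
    (∀ i j, E j i → 0 < A i j) → (∀ i j, ¬ E j i → A i j = 0) →
    ∀ x : ℝ → V → ℝ,
      (∀ (i : V) (t : ℝ),
        HasDerivAt (fun s => x s i) (∑ j, A i j * (x t j - x t i)) t) →
      ∃ c : ℝ, ∀ i ∈ S, Tendsto (fun t => x t i) atTop (𝓝 c)

attribute [local instance] Matrix.linftyOpNormedAddCommGroup Matrix.linftyOpNormedSpace
  Matrix.linftyOpNormedRing Matrix.linftyOpNormedAlgebra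

open NormedSpace in
/-- The analytic core: two nonempty disjoint closed (no incoming edges from outside)
subsets of `S` prevent common convergence. -/
lemma aux_not_conv {V : Type*} [Fintype V] [DecidableEq V] (E : V → V → Prop) (S : Set V)
    (S₁ S₂ : Set V) (h1 : S₁.Nonempty) (h2 : S₂.Nonempty) (hsub1 : S₁ ⊆ S) (hsub2 : S₂ ⊆ S)
    (hd : Disjoint S₁ S₂)
    (hc1 : ∀ i ∈ S₁, ∀ j ∉ S₁, ¬ E j i) (hc2 : ∀ i ∈ S₂, ∀ j ∉ S₂, ¬ E j i) :
    ¬ ConvergesTogether E S := by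
  classical
  intro hconv
  set A : Matrix V V ℝ := Matrix.of fun i j => if E j i then (1:ℝ) else 0 with hA
  set M : Matrix V V ℝ := Matrix.of fun i j => A i j - (if j = i then ∑ k, A i k else 0) with hM
  set x₀ : V → ℝ := fun j => if j ∈ S₁ then (1:ℝ) else 0 with hx₀
  -- a row of M supported in a closed set kills vectors vanishing on that set
  have hstep : ∀ (T : Set V), (∀ a ∈ T, ∀ b ∉ T, ¬ E b a) →
      ∀ i ∈ T, ∀ v : V → ℝ, (∀ j ∈ T, v j = 0) → M.mulVec v i = 0 := by
    intro T hT i hi v hv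
    have hterm : ∀ j, M i j * v j = 0 := by
      intro j
      by_cases hj : j ∈ T
      · simp [hv j hj]
      · have hji : j ≠ i := fun h => hj (h ▸ hi)
        have hAij : A i j = 0 := by simp [hA, hT i hi j hj]
        simp [hM, hAij, hji]
    simp [Matrix.mulVec, dotProduct, hterm]
  -- row sums of M vanish
  have hrowsum : ∀ i, ∑ j, M i j = 0 := by
    intro i
    have : ∑ j, M i j = (∑ j, A i j) - ∑ j, (if j = i then ∑ k, A i k else 0) := by
      simp [hM, Finset.sum_sub_distrib]
    rw [this, Finset.sum_ite_eq' Finset.univ i (fun _ => ∑ k, A i k)]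
    simp
  -- key: powers of M kill x₀ on S₁ ∪ S₂
  have hkey : ∀ n : ℕ, ∀ i ∈ S₁ ∪ S₂, (M ^ (n+1)).mulVec x₀ i = 0 := by
    intro n
    induction n with
    | zero =>
      intro i hi
      rcases hi with hi | hi
      · -- i ∈ S₁ : M.mulVec x₀ i = row sum of M = 0
        have hterm : ∀ j, M i j * x₀ j = M i j := by
          intro j
          by_cases hj : j ∈ S₁
          · simp [hx₀, hj]
          · have hji : j ≠ i := fun h => hj (h ▸ hi)
            have hAij : A i j = 0 := by simp [hA, hc1 i hi j hj]
            have : M i j = 0 := by simp [hM, hAij, hji]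
            simp [this]
        have : (M ^ 1).mulVec x₀ i = ∑ j, M i j := by
          simp only [pow_one, Matrix.mulVec, dotProduct]
          exact Finset.sum_congr rfl fun j _ => hterm j
        rw [this, hrowsum]
      · -- i ∈ S₂ : x₀ vanishes on S₂
        have := hstep S₂ hc2 i hi x₀ (fun j hj => by
          have hjn : j ∉ S₁ := fun h => (hd.le_bot ⟨h, hj⟩ : j ∈ (⊥ : Set V))
          simp [hx₀, hjn])
        simpa [pow_one] using this
    | succ n ih =>
      intro i hi
      have hsplit : (M ^ (n+2)).mulVec x₀ = M.mulVec ((M ^ (n+1)).mulVec x₀) := by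
        rw [Matrix.mulVec_mulVec, ← pow_succ']
      rcases hi with hi | hi
      · rw [hsplit]
        exact hstep S₁ hc1 i hi _ (fun j hj => ih j (Or.inl hj))
      · rw [hsplit]
        exact hstep S₂ hc2 i hi _ (fun j hj => ih j (Or.inr hj))
  -- the solution
  set x : ℝ → V → ℝ := fun t => (exp (t • M)).mulVec x₀ with hx
  -- evaluation is a continuous linear map
  have φdef : ∀ i : V, ∃ φ : Matrix V V ℝ →L[ℝ] ℝ, ∀ B : Matrix V V ℝ, φ B = B.mulVec x₀ i := by
    intro i
    refine ⟨LinearMap.toContinuousLinearMap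
      { toFun := fun B : Matrix V V ℝ => B.mulVec x₀ i
        map_add' := fun B C => by simp [Matrix.add_mulVec]
        map_smul' := fun c B => by simp [Matrix.smul_mulVec] }, fun B => rfl⟩
  -- x is constant on S₁ ∪ S₂
  have hconst : ∀ t : ℝ, ∀ i ∈ S₁ ∪ S₂, x t i = x₀ i := by
    intro t i hi
    obtain ⟨φ, hφ⟩ := φdef i
    have hsum : Summable fun n : ℕ => ((n.factorial : ℝ)⁻¹) • (t • M) ^ n :=
      expSeries_summable' (𝕂 := ℝ) (t • M)
    have h1' : x t i = φ (exp (t • M)) := (hφ _).symm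
    rw [h1', exp_eq_tsum (𝕂 := ℝ), φ.map_tsum hsum]
    have hz : ∀ n : ℕ, n ≠ 0 → φ (((n.factorial : ℝ)⁻¹) • (t • M) ^ n) = 0 := by
      intro n hn
      obtain ⟨m, rfl⟩ := Nat.exists_eq_succ_of_ne_zero hn
      rw [map_smul, smul_pow, map_smul, hφ]
      simp [hkey m i hi]
    rw [tsum_eq_single 0 hz]
    simp [hφ]
  -- derivative of x
  have hderiv : ∀ (i : V) (t : ℝ),
      HasDerivAt (fun s => x s i) (∑ j, A i j * (x t j - x t i)) t := by
    intro i t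
    obtain ⟨φ, hφ⟩ := φdef i
    have hD : HasDerivAt (fun u : ℝ => exp (u • M)) (exp (t • M) * M) t :=
      hasDerivAt_exp_smul_const M t
    have hx' : HasDerivAt (fun s => x s i) (φ (exp (t • M) * M)) t := by
      have h := φ.hasFDerivAt.comp_hasDerivAt t hD
      have heq : (⇑φ ∘ fun u : ℝ => exp (u • M)) = fun s => x s i := by
        funext s; simp [hx, hφ]
      rwa [heq] at h
    have hcomm : exp (t • M) * M = M * exp (t • M) :=
      (((Commute.refl M).smul_right t).exp_right).eq.symm
    have hval : φ (exp (t • M) * M) = ∑ j, A i j * (x t j - x t i) := by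
      rw [hφ, hcomm, ← Matrix.mulVec_mulVec]
      have hMv : ∀ v : V → ℝ, M.mulVec v i = ∑ j, A i j * (v j - v i) := by
        intro v
        have lhs : M.mulVec v i
            = (∑ j, A i j * v j) - (∑ k, A i k) * v i := by
          simp only [Matrix.mulVec, dotProduct, hM, Matrix.of_apply, sub_mul,
            Finset.sum_sub_distrib]
          congr 1
          rw [Finset.sum_congr rfl (fun j _ => by rw [ite_mul, zero_mul]),
            Finset.sum_ite_eq' Finset.univ i]
          simp
        rw [lhs]
        rw [Finset.sum_congr rfl (fun j (_ : j ∈ Finset.univ) => mul_sub (A i j) (v j) (v i)),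
          Finset.sum_sub_distrib, Finset.sum_mul]
      exact hMv _
    rwa [hval] at hx'
  -- contradiction
  obtain ⟨c, hc⟩ := hconv A
    (fun i j h => by simp [hA, h])
    (fun i j h => by simp [hA, h])
    x hderiv
  obtain ⟨i₁, hi₁⟩ := h1
  obtain ⟨i₂, hi₂⟩ := h2
  have hx1 : ∀ t, x t i₁ = 1 := fun t => by
    rw [hconst t i₁ (Or.inl hi₁)]; simp [hx₀, hi₁]
  have hx2 : ∀ t, x t i₂ = 0 := fun t => by
    have : i₂ ∉ S₁ := fun h => (hd.le_bot ⟨h, hi₂⟩ : i₂ ∈ (⊥ : Set V))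
    rw [hconst t i₂ (Or.inr hi₂)]; simp [hx₀, this]
  have t1 : Tendsto (fun t => x t i₁) atTop (𝓝 1) := by
    simpa [funext hx1] using (tendsto_const_nhds : Tendsto (fun _ : ℝ => (1:ℝ)) atTop _)
  have t2 : Tendsto (fun t => x t i₂) atTop (𝓝 0) := by
    simpa [funext hx2] using (tendsto_const_nhds : Tendsto (fun _ : ℝ => (0:ℝ)) atTop _)
  have hc1' : c = 1 := tendsto_nhds_unique (hc i₁ (hsub1 hi₁)) t1
  have hc2' : c = 0 := tendsto_nhds_unique (hc i₂ (hsub2 hi₂)) t2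
  exact one_ne_zero (hc1' ▸ hc2')

/-- If the induced subgraph on a nonempty `S` has no directed spanning tree and no
node of `S` has incoming edges from outside `S`, then there are two nonempty
disjoint subsets `S₁, S₂ ⊆ S`, neither receiving edges from outside itself, whose
steady states are determined independently; in particular the nodes of `S` do not
converge to a common value for all positive weights and initial conditions. -/
theorem stmt11 {V : Type*} [Fintype V] (E : V → V → Prop) (S : Set V)
    (hS : S.Nonempty)
    (hclosed : ∀ i ∈ S, ∀ j ∉ S, ¬ E j i)
    (hnotree : ¬ ∃ r ∈ S, ∀ j ∈ S,
      Relation.ReflTransGen (fun a b => a ∈ S ∧ b ∈ S ∧ E a b) r j) :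
    ∃ S₁ S₂ : Set V, S₁ ⊆ S ∧ S₂ ⊆ S ∧ S₁.Nonempty ∧ S₂.Nonempty ∧
      Disjoint S₁ S₂ ∧
      (∀ i ∈ S₁, ∀ j ∉ S₁, ¬ E j i) ∧
      (∀ i ∈ S₂, ∀ j ∉ S₂, ¬ E j i) ∧
      ¬ ConvergesTogether E S := by
  classical
  set R : V → V → Prop := Relation.ReflTransGen (fun a b => a ∈ S ∧ b ∈ S ∧ E a b) with hR
  set Anc : V → Set V := fun i => {j | j ∈ S ∧ R j i} with hAnc
  have hAncSub : ∀ i, Anc i ⊆ S := fun i j hj => hj.1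
  have hself : ∀ i ∈ S, i ∈ Anc i := fun i hi => ⟨hi, Relation.ReflTransGen.refl⟩
  have hmono : ∀ i j, j ∈ Anc i → Anc j ⊆ Anc i := by
    intro i j hj k hk
    exact ⟨hk.1, hk.2.trans hj.2⟩
  have hAncClosed : ∀ i, ∀ a ∈ Anc i, ∀ b ∉ Anc i, ¬ E b a := by
    intro i a ha b hb hE
    by_cases hbS : b ∈ S
    · exact hb ⟨hbS, (Relation.ReflTransGen.single ⟨hbS, ha.1, hE⟩).trans ha.2⟩
    · exact hclosed a ha.1 b hbS hE
  -- minimal ancestor set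
  obtain ⟨i₀, hi₀S, hi₀min⟩ := Set.exists_min_image S (fun i => (Anc i).ncard) S.toFinite hS
  have hstrong : ∀ m ∈ Anc i₀, Anc m = Anc i₀ := by
    intro m hm
    exact Set.eq_of_subset_of_ncard_le (hmono i₀ m hm) (hi₀min m (hm.1)) (Set.toFinite _)
  -- i₀ is not a root
  push_neg at hnotree
  obtain ⟨k, hkS, hk⟩ := hnotree i₀ hi₀S
  -- disjointness
  have hdisj : Disjoint (Anc i₀) (Anc k) := by
    rw [Set.disjoint_left]
    intro m hm1 hm2
    have hi₀m : i₀ ∈ Anc m := (hstrong m hm1).symm ▸ hself i₀ hi₀S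
    exact hk (hi₀m.2.trans hm2.2)
  exact ⟨Anc i₀, Anc k, hAncSub _, hAncSub _, ⟨i₀, hself i₀ hi₀S⟩, ⟨k, hself k hkS⟩,
    hdisj, hAncClosed _, hAncClosed _,
    aux_not_conv E S (Anc i₀) (Anc k) ⟨i₀, hself i₀ hi₀S⟩ ⟨k, hself k hkS⟩
      (hAncSub _) (hAncSub _) hdisj (hAncClosed _) (hAncClosed _)⟩
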